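/- Let u, v, t be unit vectors in a complex inner product space. Then |⟨u, t⟩|² + |⟨t, v⟩|² ≤ 1 + |⟨u, v⟩|. -/

import Mathlib

open scoped InnerProductSpace

/-- For unit vectors `u, v, t` in a complex inner product space,
`|⟨u,t⟩|² + |⟨t,v⟩|² ≤ 1 + |⟨u,v⟩|`. -/
theorem stmt_2 {E : Type*} [NormedAddCommGroup E] [InnerProductSpace ℂ E]
    (u v t : E) (hu : ‖u‖ = 1) (hv : ‖v‖ = 1) (ht : ‖t‖ = 1) :
    ‖⟪u, t⟫_ℂ‖ ^ 2 + ‖⟪t, v⟫_ℂ‖ ^ 2 ≤ 1 + ‖⟪u, v⟫_ℂ‖ := by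
  set a := ⟪u, t⟫_ℂ with ha
  set b := ⟪t, v⟫_ℂ with hb
  set c := ‖⟪u, v⟫_ℂ‖ with hc
  set S := ‖a‖ ^ 2 + ‖b‖ ^ 2 with hS
  have hcnn : (0:ℝ) ≤ c := norm_nonneg _
  have hSnn : 0 ≤ S := by positivity
  rcases eq_or_lt_of_le hSnn with h0 | hpos
  · rw [← h0]; linarith
  set s := a • u + (starRingEnd ℂ b) • v with hs
  have hst : ⟪s, t⟫_ℂ = (S : ℂ) := by
    rw [hs, inner_add_left, inner_smul_left, inner_smul_left, ← ha,
      ← inner_conj_symm v t, ← hb]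
    simp only [Complex.conj_conj, hS]
    rw [mul_comm ((starRingEnd ℂ) a) a, Complex.mul_conj, Complex.mul_conj]
    push_cast [Complex.normSq_eq_norm_sq]
    ring
  have h1 : S ≤ ‖s‖ := by
    have := norm_inner_le_norm (𝕜 := ℂ) s t
    rw [hst, ht, mul_one, Complex.norm_real, Real.norm_of_nonneg hSnn] at this
    exact this
  have h2 : ‖s‖ ^ 2 ≤ S + 2 * (‖a‖ * ‖b‖) * c := by
    have hns : ‖s‖ ^ 2 = ‖a‖ ^ 2 + 2 * RCLike.re ⟪a • u, (starRingEnd ℂ b) • v⟫_ℂ + ‖b‖ ^ 2 := by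
      rw [hs, norm_add_sq (𝕜 := ℂ), norm_smul, norm_smul, hu, hv]
      simp only [mul_one]
      ring_nf
      simp
    have hre : RCLike.re ⟪a • u, (starRingEnd ℂ b) • v⟫_ℂ ≤ ‖a‖ * ‖b‖ * c := by
      calc RCLike.re ⟪a • u, (starRingEnd ℂ b) • v⟫_ℂ
          ≤ ‖⟪a • u, (starRingEnd ℂ b) • v⟫_ℂ‖ := RCLike.re_le_norm _
        _ = ‖a‖ * ‖b‖ * c := by
            rw [inner_smul_left, inner_smul_right, hc]
            simp [norm_mul, mul_assoc]
    rw [hns]; nlinarith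
  have h3 : 2 * (‖a‖ * ‖b‖) ≤ S := by nlinarith [sq_nonneg (‖a‖ - ‖b‖)]
  have h4 : S ^ 2 ≤ S * (1 + c) := by
    nlinarith
  have := (mul_le_mul_iff_right₀ hpos).mp (by nlinarith : S * S ≤ S * (1 + c))
  linarith
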